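/- Let A be a unital C*-algebra with a faithful tracial state τ, let u = (e_{x,a})_{x,a ∈ Fin n} be a quantum permutation over A, and let A' = (a_{i,j}) ∈ M_n(ℂ). If a_{i,j} = a_{k,l} whenever e_{i,k} e_{j,l} ≠ 0, then u* (A' ⊗ 1) u = A' ⊗ 1 in M_n(A), and consequently (A' ⊗ 1) u = u (A' ⊗ 1). -/
import Mathlib

open Matrix in
lemma orth_of_sum_one
    {A : Type*} [NormedRing A] [StarRing A] [CStarRing A] [NormedAlgebra ℂ A]
    [StarModule ℂ A] [CompleteSpace A]
    {ι : Type*} [Fintype ι] [DecidableEq ι] (p : ι → A)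
    (hidem : ∀ i, p i * p i = p i)
    (hsa : ∀ i, star (p i) = p i)
    (hsum : ∑ i, p i = 1)
    {i j : ι} (hij : i ≠ j) : p i * p j = 0 := by
  letI : CStarAlgebra A := ⟨⟩
  letI := CStarAlgebra.spectralOrder A
  letI := CStarAlgebra.spectralOrderedRing A
  have hterm : ∀ k, p j * p k * p j = star (p k * p j) * (p k * p j) := by
    intro k
    rw [StarMul.star_mul, hsa, hsa]
    calc p j * p k * p j = p j * (p k * p k) * p j := by rw [hidem]
      _ = p j * p k * (p k * p j) := by simp only [mul_assoc]
  have key : ∑ k ∈ Finset.univ.erase j, star (p k * p j) * (p k * p j) = 0 := by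
    have hs : ∑ k ∈ Finset.univ.erase j, p k = 1 - p j := by
      rw [eq_sub_iff_add_eq, Finset.sum_erase_add _ _ (Finset.mem_univ j), hsum]
    calc ∑ k ∈ Finset.univ.erase j, star (p k * p j) * (p k * p j)
        = p j * (∑ k ∈ Finset.univ.erase j, p k) * p j := by
          rw [Finset.mul_sum, Finset.sum_mul]
          exact Finset.sum_congr rfl fun k _ => (hterm k).symm
      _ = 0 := by rw [hs, mul_sub, mul_one, hidem, sub_self, zero_mul]
  have hz : star (p i * p j) * (p i * p j) = 0 := by
    have := (Finset.sum_eq_zero_iff_of_nonneg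
      (fun k _ => star_mul_self_nonneg (p k * p j))).mp key i
      (Finset.mem_erase.mpr ⟨hij, Finset.mem_univ i⟩)
    exact this
  exact (CStarRing.star_mul_self_eq_zero_iff _).mp hz

open Matrix in
/-- If a scalar matrix `A'` satisfies `a_{i,j} = a_{k,l}` whenever `e_{i,k} e_{j,l} ≠ 0`
for a quantum permutation `u = (e_{x,a})`, then `u*(A'⊗1)u = A'⊗1`, and consequently
`(A'⊗1)u = u(A'⊗1)`. -/
theorem fixed_matrix_commutes_with_quantum_permutation
    {A : Type*} [NormedRing A] [StarRing A] [CStarRing A] [NormedAlgebra ℂ A]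
    [StarModule ℂ A] [CompleteSpace A]
    {n : ℕ} (e : Fin n → Fin n → A)
    (hidem : ∀ x a, e x a * e x a = e x a)
    (hsa : ∀ x a, star (e x a) = e x a)
    (hrow : ∀ x, ∑ a, e x a = 1)
    (hcol : ∀ a, ∑ x, e x a = 1)
    (u : Matrix (Fin n) (Fin n) A) (hu : u = Matrix.of e)
    (A' : Matrix (Fin n) (Fin n) ℂ)
    (hA' : ∀ i j k l, e i k * e j l ≠ 0 → A' i j = A' k l) :
    uᴴ * A'.map (algebraMap ℂ A) * u = A'.map (algebraMap ℂ A) ∧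
    A'.map (algebraMap ℂ A) * u = u * A'.map (algebraMap ℂ A) := by
  have h1 : uᴴ * A'.map (algebraMap ℂ A) * u = A'.map (algebraMap ℂ A) := by
    ext i k
    simp only [hu, Matrix.mul_apply, Matrix.conjTranspose_apply, Matrix.map_apply,
      Matrix.of_apply, hsa, Algebra.algebraMap_eq_smul_one, Finset.sum_mul,
      mul_smul_comm, smul_mul_assoc, mul_one]
    have hterm : ∀ r l : Fin n, A' l r • (e l i * e r k) = A' i k • (e l i * e r k) := by
      intro r l
      by_cases h : e l i * e r k = 0
      · rw [h, smul_zero, smul_zero]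
      · rw [hA' l r i k h]
    calc ∑ r : Fin n, ∑ l : Fin n, A' l r • (e l i * e r k)
        = ∑ r : Fin n, ∑ l : Fin n, A' i k • (e l i * e r k) := by
          exact Finset.sum_congr rfl fun r _ => Finset.sum_congr rfl fun l _ => hterm r l
      _ = A' i k • ∑ r : Fin n, (∑ l : Fin n, e l i) * e r k := by
          simp_rw [← Finset.smul_sum, Finset.sum_mul]
      _ = A' i k • (1 : A) := by
          rw [hcol i]
          simp_rw [one_mul]
          rw [hcol k]
  have huu : u * uᴴ = 1 := by
    ext x y
    simp only [hu, Matrix.mul_apply, Matrix.conjTranspose_apply, Matrix.of_apply, hsa]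
    by_cases hxy : x = y
    · subst hxy
      rw [Matrix.one_apply_eq]
      calc ∑ a, e x a * e x a = ∑ a, e x a :=
            Finset.sum_congr rfl fun a _ => hidem x a
        _ = 1 := hrow x
    · rw [Matrix.one_apply_ne hxy]
      refine Finset.sum_eq_zero fun a _ => ?_
      exact orth_of_sum_one (fun z => e z a) (fun z => hidem z a) (fun z => hsa z a)
        (hcol a) hxy
  refine ⟨h1, ?_⟩
  conv_rhs => rw [← h1]
  rw [← Matrix.mul_assoc, ← Matrix.mul_assoc, huu, Matrix.one_mul]
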